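/- Lipschitz continuity of constrained sliding-window maxima: let g, f : ℝ → ℝ be Lipschitz with constants L_g ≥ 0 and L_f ≥ 0 respectively, and let Δ > 0 and h > 0 be real numbers. Define w : ℝ → ℝ by w(x) = max{ g(y) + f(z) : y, z ∈ [x, x+Δ] and |y − z| ≤ h }. Then w is Lipschitz with constant L_g + 4·L_f; in particular, w is continuous. -/

import Mathlib

/-- **Lipschitz continuity of constrained sliding-window maxima.** If `g` is Lipschitz with
constant `L_g` and `f` is Lipschitz with constant `L_f`, and `Δ, h > 0`, then the function
`w(x) = max { g(y) + f(z) : y, z ∈ [x, x+Δ], |y − z| ≤ h }` is Lipschitz with constant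
`L_g + 4·L_f`; in particular, `w` is continuous. -/
theorem sliding_window_max_lipschitz
    (g f : ℝ → ℝ) (Lg Lf : ℝ) (hLg : 0 ≤ Lg) (hLf : 0 ≤ Lf)
    (hg : ∀ x y, |g x - g y| ≤ Lg * |x - y|)
    (hf : ∀ x y, |f x - f y| ≤ Lf * |x - y|)
    (Δ h : ℝ) (hΔ : 0 < Δ) (hh : 0 < h)
    (w : ℝ → ℝ)
    (hw : ∀ x, w x = sSup {v | ∃ y z, y ∈ Set.Icc x (x + Δ) ∧ z ∈ Set.Icc x (x + Δ) ∧
      |y - z| ≤ h ∧ v = g y + f z}) :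
    (∀ x y, |w x - w y| ≤ (Lg + 4 * Lf) * |x - y|) ∧ Continuous w := by
  set S : ℝ → Set ℝ := fun x => {v | ∃ y z, y ∈ Set.Icc x (x + Δ) ∧ z ∈ Set.Icc x (x + Δ) ∧
      |y - z| ≤ h ∧ v = g y + f z} with hS
  have hne : ∀ x, (S x).Nonempty := by
    intro x
    exact ⟨g x + f x, x, x, ⟨le_refl x, by linarith⟩, ⟨le_refl x, by linarith⟩,
      by simp [abs_of_nonneg, hh.le], rfl⟩
  have hbdd : ∀ x, BddAbove (S x) := by
    intro x
    refine ⟨g x + f x + (Lg + Lf) * Δ, ?_⟩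
    rintro v ⟨y, z, hy, hz, hyz, rfl⟩
    have h1 : |g y - g x| ≤ Lg * Δ := by
      refine (hg y x).trans ?_
      have : |y - x| ≤ Δ := by
        rw [abs_of_nonneg (by linarith [hy.1])]; linarith [hy.2]
      exact mul_le_mul_of_nonneg_left this hLg
    have h2 : |f z - f x| ≤ Lf * Δ := by
      refine (hf z x).trans ?_
      have : |z - x| ≤ Δ := by
        rw [abs_of_nonneg (by linarith [hz.1])]; linarith [hz.2]
      exact mul_le_mul_of_nonneg_left this hLf
    have := abs_le.1 h1
    have := abs_le.1 h2
    nlinarith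
  have key : ∀ x x', w x ≤ w x' + (Lg + Lf) * |x - x'| := by
    intro x x'
    rw [hw x, hw x']
    refine csSup_le (hne x) ?_
    rintro v ⟨y, z, hy, hz, hyz, rfl⟩
    set t := x' - x with ht
    have hmem : g (y + t) + f (z + t) ∈ S x' := by
      refine ⟨y + t, z + t, ⟨by linarith [hy.1], by linarith [hy.2]⟩,
        ⟨by linarith [hz.1], by linarith [hz.2]⟩, ?_, rfl⟩
      have : y + t - (z + t) = y - z := by ring
      rw [this]; exact hyz
    have hle : g (y + t) + f (z + t) ≤ sSup (S x') := le_csSup (hbdd x') hmem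
    have h1 : |g y - g (y + t)| ≤ Lg * |x - x'| := by
      refine (hg y (y + t)).trans ?_
      have : |y - (y + t)| = |x - x'| := by
        rw [show y - (y + t) = x - x' by rw [ht]; ring]
      rw [this]
    have h2 : |f z - f (z + t)| ≤ Lf * |x - x'| := by
      refine (hf z (z + t)).trans ?_
      have : |z - (z + t)| = |x - x'| := by
        rw [show z - (z + t) = x - x' by rw [ht]; ring]
      rw [this]
    have := abs_le.1 h1
    have := abs_le.1 h2
    linarith
  have lip : ∀ x y, |w x - w y| ≤ (Lg + 4 * Lf) * |x - y| := by
    intro x y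
    have h1 := key x y
    have h2 := key y x
    rw [abs_sub_comm y x] at h2
    have habs : 0 ≤ |x - y| := abs_nonneg _
    rw [abs_sub_le_iff]
    constructor <;> nlinarith
  refine ⟨lip, ?_⟩
  have : LipschitzWith ⟨Lg + 4 * Lf, by positivity⟩ w := by
    apply LipschitzWith.of_dist_le_mul
    intro a b
    rw [Real.dist_eq, Real.dist_eq]; exact lip a b
  exact this.continuous
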